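/- Let Q ≪ P with Q = P on G, E_Q[ξ|G] ∈ L∞(F) for all ξ ∈ L∞(F), and let π : L∞(F) → L∞(G) be monotone increasing, regular, and cash invariant (π(X + Λ) = π(X) + Λ for all G-measurable Λ ∈ L∞(G)). Then K(X, Q) = E_Q[X|G] − π*(Q), where π*(Q) := ess sup_{ξ ∈ L∞(F)} ( E_Q[ξ|G] − π(ξ) ) is the conditional Fenchel conjugate. -/

import Mathlib

open MeasureTheory Filter Set

noncomputable section

/-- `X` is a bounded `F`-measurable random variable (an element of `L∞(F)`). -/
def IsBddMeas {Ω : Type*} (F : MeasurableSpace Ω) (X : Ω → ℝ) : Prop :=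
  Measurable[F] X ∧ ∃ C : ℝ, ∀ ω, |X ω| ≤ C

/-- Regularity (REG) of the conditional map `π` with respect to the
sub-σ-algebra `m`: `π (X 1_A + Y 1_{Aᶜ}) = π X 1_A + π Y 1_{Aᶜ}` a.s. -/
def Regular {Ω : Type*} (F m : MeasurableSpace Ω) (μ : @Measure Ω F)
    (π : (Ω → ℝ) → Ω → ℝ) : Prop :=
  ∀ X Y : Ω → ℝ, IsBddMeas F X → IsBddMeas F Y → ∀ A : Set Ω, MeasurableSet[m] A →
    π (A.indicator X + Aᶜ.indicator Y) =ᵐ[μ] A.indicator (π X) + Aᶜ.indicator (π Y)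

/-- `I` is an essential infimum (in the `μ`-a.e. pointwise order) of the set
`S` of random variables. -/
def IsEssInf {Ω : Type*} {F : MeasurableSpace Ω} (μ : @Measure Ω F)
    (S : Set (Ω → ℝ)) (I : Ω → ℝ) : Prop :=
  (∀ f ∈ S, I ≤ᵐ[μ] f) ∧ ∀ g : Ω → ℝ, (∀ f ∈ S, g ≤ᵐ[μ] f) → g ≤ᵐ[μ] I

/-- `I` is an essential supremum (in the `μ`-a.e. pointwise order) of the set
`S` of random variables. -/
def IsEssSup {Ω : Type*} {F : MeasurableSpace Ω} (μ : @Measure Ω F)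
    (S : Set (Ω → ℝ)) (I : Ω → ℝ) : Prop :=
  (∀ f ∈ S, f ≤ᵐ[μ] I) ∧ ∀ g : Ω → ℝ, (∀ f ∈ S, f ≤ᵐ[μ] g) → I ≤ᵐ[μ] g

/-- For a monotone, regular, cash invariant `π` and `Q ≪ P` with `Q = P` on
`G`, one has `K(X,Q) = E_Q[X|G] − π*(Q)` where `π*(Q)` is the conditional
Fenchel conjugate `ess sup_ξ (E_Q[ξ|G] − π(ξ))`. -/
theorem K_eq_condexp_sub_fenchel
    {Ω : Type*} [F : MeasurableSpace Ω] (μ : Measure Ω) [IsProbabilityMeasure μ]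
    (m : MeasurableSpace Ω) (hm : m ≤ F)
    (π : (Ω → ℝ) → Ω → ℝ) (hreg : Regular F m μ π)
    (hmono : ∀ X Y : Ω → ℝ, IsBddMeas F X → IsBddMeas F Y →
      X ≤ᵐ[μ] Y → π X ≤ᵐ[μ] π Y)
    (hcash : ∀ X : Ω → ℝ, IsBddMeas F X → ∀ Λ : Ω → ℝ, IsBddMeas m Λ →
      π (X + Λ) =ᵐ[μ] π X + Λ)
    (Q : @Measure Ω F) [IsProbabilityMeasure Q] (hQ : Q ≪ μ)
    (hQm : ∀ A : Set Ω, MeasurableSet[m] A → Q A = μ A)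
    (hce : ∀ ξ : Ω → ℝ, IsBddMeas F ξ → ∃ C : ℝ, ∀ᵐ ω ∂μ, |(Q[ξ|m]) ω| ≤ C)
    (X : Ω → ℝ) (hX : IsBddMeas F X)
    (K πs : Ω → ℝ)
    (hK : IsEssInf μ
      {g | ∃ ξ : Ω → ℝ, IsBddMeas F ξ ∧ (Q[X|m] ≤ᵐ[Q] Q[ξ|m]) ∧ g = π ξ} K)
    (hπs : IsEssSup μ
      {g | ∃ ξ : Ω → ℝ, IsBddMeas F ξ ∧ g = fun ω => (Q[ξ|m]) ω - π ξ ω} πs) :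
    K =ᵐ[μ] fun ω => (Q[X|m]) ω - πs ω := by

  -- preliminaries
  have hμm : ∀ A : Set Ω, MeasurableSet[m] A → μ A = 0 → Q A = 0 := by
    intro A hA h; rw [hQm A hA]; exact h
  have haeQ : ∀ {p : Ω → Prop}, (∀ᵐ ω ∂μ, p ω) → (∀ᵐ ω ∂Q, p ω) :=
    fun h => h.filter_mono hQ.ae_le
  -- Q-a.e. → μ-a.e. for inequalities between m-measurable functions
  have hQtoμ : ∀ f g : Ω → ℝ, Measurable[m] f → Measurable[m] g →
      f ≤ᵐ[Q] g → f ≤ᵐ[μ] g := by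
    intro f g hf hg h
    rw [Filter.EventuallyLE, ae_iff] at h ⊢
    have hs : MeasurableSet[m] {ω | ¬ f ω ≤ g ω} := by
      simp only [not_le]
      exact measurableSet_lt hg hf
    rw [← hQm _ hs]; exact h
  -- bounded measurable functions are integrable
  have hint : ∀ ξ : Ω → ℝ, IsBddMeas F ξ → Integrable ξ Q := by
    rintro ξ ⟨hmeas, C, hC⟩
    refine ⟨hmeas.aestronglyMeasurable, ?_⟩
    exact HasFiniteIntegral.of_bounded (C := C)
      (ae_of_all _ fun ω => by simpa [Real.norm_eq_abs] using hC ω)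
  -- key claim: for every bounded measurable ξ, E_Q[ξ|m] - π ξ ≤ E_Q[X|m] - K  μ-a.e.
  have key : ∀ ξ : Ω → ℝ, IsBddMeas F ξ →
      (fun ω => (Q[ξ|m]) ω - π ξ ω) ≤ᵐ[μ] fun ω => (Q[X|m]) ω - K ω := by
    intro ξ hξ
    obtain ⟨CX, hCX⟩ := hce X hX
    obtain ⟨Cξ, hCξ⟩ := hce ξ hξ
    set C : ℝ := |CX| + |Cξ| with hCdef
    have hC0 : 0 ≤ C := by positivity
    set Λ : Ω → ℝ := fun ω => (Q[X|m]) ω - (Q[ξ|m]) ω with hΛdef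
    set Λ' : Ω → ℝ := fun ω => max (min (Λ ω) C) (-C) with hΛ'def
    have hΛmeas : Measurable[m] Λ :=
      (stronglyMeasurable_condExp.measurable).sub stronglyMeasurable_condExp.measurable
    have hΛ'meas : Measurable[m] Λ' :=
      (hΛmeas.min measurable_const).max measurable_const
    have hΛ'bdd : ∀ ω, |Λ' ω| ≤ C := by
      intro ω
      exact abs_le.2 ⟨le_max_right _ _, max_le (min_le_right _ _) (neg_le_self hC0)⟩
    have hΛ'Bdd : IsBddMeas m Λ' := ⟨hΛ'meas, C, hΛ'bdd⟩
    have hΛ'F : IsBddMeas F Λ' := ⟨hΛ'meas.mono hm le_rfl, C, hΛ'bdd⟩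
    have hΛeq : Λ' =ᵐ[μ] Λ := by
      filter_upwards [hCX, hCξ] with ω h1 h2
      have hb : |Λ ω| ≤ C := by
        have : |Λ ω| ≤ |(Q[X|m]) ω| + |(Q[ξ|m]) ω| := abs_sub _ _
        have h1' : |(Q[X|m]) ω| ≤ |CX| := h1.trans (le_abs_self _)
        have h2' : |(Q[ξ|m]) ω| ≤ |Cξ| := h2.trans (le_abs_self _)
        linarith
      have hb' := abs_le.1 hb
      simp only [hΛ'def]
      rw [min_eq_left hb'.2, max_eq_left hb'.1]
    -- the shifted variable
    set η : Ω → ℝ := ξ + Λ' with hηdef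
    obtain ⟨hξmeas, Cξ', hCξ'⟩ := hξ
    have hηBdd : IsBddMeas F η := by
      refine ⟨hξmeas.add (hΛ'meas.mono hm le_rfl), Cξ' + C, fun ω => ?_⟩
      calc |ξ ω + Λ' ω| ≤ |ξ ω| + |Λ' ω| := abs_add_le _ _
        _ ≤ Cξ' + C := add_le_add (hCξ' ω) (hΛ'bdd ω)
    -- conditional expectation of η
    have hcη : Q[η|m] =ᵐ[Q] Q[X|m] := by
      have h1 : Q[η|m] =ᵐ[Q] Q[ξ|m] + Q[Λ'|m] :=
        condExp_add (hint ξ ⟨hξmeas, Cξ', hCξ'⟩) (hint Λ' hΛ'F) m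
      have h2 : Q[Λ'|m] = Λ' :=
        condExp_of_stronglyMeasurable hm hΛ'meas.stronglyMeasurable (hint Λ' hΛ'F)
      have h3 : Λ' =ᵐ[Q] Λ := haeQ hΛeq
      refine h1.trans ?_
      rw [h2]
      filter_upwards [h3] with ω hω
      simp only [Pi.add_apply, hω, hΛdef]
      ring
    -- feasibility of η
    have hfeas : Q[X|m] ≤ᵐ[Q] Q[η|m] := hcη.symm.le
    -- π η is in the set defining K
    have hKle : K ≤ᵐ[μ] π η := hK.1 (π η) ⟨η, hηBdd, hfeas, rfl⟩
    -- cash invariance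
    have hπη : π η =ᵐ[μ] π ξ + Λ' := hcash ξ ⟨hξmeas, Cξ', hCξ'⟩ Λ' hΛ'Bdd
    filter_upwards [hKle, hπη, hΛeq] with ω h1 h2 h3
    have : K ω ≤ π ξ ω + Λ ω := by
      rw [h2] at h1
      simpa [h3] using h1
    simp only [hΛdef] at this
    linarith
  -- upper bound: K ≤ E_Q[X|m] - πs
  have hub : K ≤ᵐ[μ] fun ω => (Q[X|m]) ω - πs ω := by
    have h := hπs.2 (fun ω => (Q[X|m]) ω - K ω) ?_
    · filter_upwards [h] with ω hω
      linarith [hω]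
    · rintro f ⟨ξ, hξ, rfl⟩
      exact key ξ hξ
  -- lower bound: E_Q[X|m] - πs ≤ K
  have hlb : (fun ω => (Q[X|m]) ω - πs ω) ≤ᵐ[μ] K := by
    refine hK.2 _ ?_
    rintro f ⟨ξ, hξ, hfeas, rfl⟩
    have h1 : (fun ω => (Q[ξ|m]) ω - π ξ ω) ≤ᵐ[μ] πs := hπs.1 _ ⟨ξ, hξ, rfl⟩
    have h2 : Q[X|m] ≤ᵐ[μ] Q[ξ|m] :=
      hQtoμ _ _ stronglyMeasurable_condExp.measurable
        stronglyMeasurable_condExp.measurable hfeas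
    filter_upwards [h1, h2] with ω hω1 hω2
    linarith [hω1, hω2]
  exact hub.antisymm hlb
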